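/- The set of all ratios o(G)/o(H), where G ranges over all finite abelian groups and H ranges over all subgroups of G, is dense in the interval [1, ∞). That is, for every real number a ≥ 1 and every ε > 0, there exist a finite abelian group G and a subgroup H of G such that |o(G)/o(H) - a| < ε. -/

import Mathlib

open Filter Topology

noncomputable def avgOrder (G : Type*) [Group G] : ℝ :=
  (∑ᶠ x : G, (orderOf x : ℝ)) / (Nat.card G)

/-! Auxiliary: sum of additive orders. -/

noncomputable def sumOrd (A : Type*) [AddMonoid A] [Fintype A] : ℕ :=
  ∑ a : A, addOrderOf a

lemma sumOrd_congr {A B : Type*} [AddMonoid A] [AddMonoid B] [Fintype A] [Fintype B]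
    (e : A ≃+ B) : sumOrd A = sumOrd B := by
  unfold sumOrd
  rw [← Equiv.sum_comp e.toEquiv (fun b => addOrderOf b)]
  exact Finset.sum_congr rfl fun a _ => (e.addOrderOf_eq a).symm

lemma sumOrd_prod (A B : Type*) [AddGroup A] [AddGroup B] [Fintype A] [Fintype B]
    (h : Nat.Coprime (Fintype.card A) (Fintype.card B)) :
    sumOrd (A × B) = sumOrd A * sumOrd B := by
  unfold sumOrd
  rw [Finset.sum_mul_sum, Fintype.sum_prod_type]
  refine Finset.sum_congr rfl fun a _ => Finset.sum_congr rfl fun b _ => ?_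
  rw [Prod.addOrderOf]
  exact Nat.Coprime.lcm_eq_mul <|
    (Nat.Coprime.coprime_dvd_left (addOrderOf_dvd_card) <|
      Nat.Coprime.coprime_dvd_right (addOrderOf_dvd_card) h)

lemma sumOrd_subsingleton (A : Type*) [AddMonoid A] [Fintype A] [Subsingleton A] :
    sumOrd A = 1 := by
  unfold sumOrd
  have h : ∀ x : A, addOrderOf x = 1 := fun x => by
    rw [Subsingleton.elim x 0, addOrderOf_zero]
  have hc : Fintype.card A = 1 := Fintype.card_eq_one_iff.mpr ⟨0, fun y => Subsingleton.elim y 0⟩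
  simp [h, hc]

lemma sumOrd_prime_pow_like (A : Type*) [AddGroup A] [Fintype A] {p : ℕ} (hp : p.Prime)
    (hord : ∀ x : A, p • x = 0) :
    sumOrd A = (Fintype.card A - 1) * p + 1 := by
  classical
  unfold sumOrd
  rw [← Finset.sum_erase_add _ _ (Finset.mem_univ (0 : A)), addOrderOf_zero]
  congr 1
  rw [Finset.sum_congr rfl (fun x hx => ?_), Finset.sum_const, smul_eq_mul,
    Finset.card_erase_of_mem (Finset.mem_univ _), Finset.card_univ]
  have h1 : addOrderOf x ∣ p := addOrderOf_dvd_iff_nsmul_eq_zero.mpr (hord x)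
  have h2 : addOrderOf x ≠ 1 := by
    rw [Finset.mem_erase] at hx
    simpa [AddMonoid.addOrderOf_eq_one_iff] using hx.1
  rcases (Nat.Prime.eq_one_or_self_of_dvd hp _ h1) with h | h
  · exact absurd h h2
  · exact h

lemma nsmul_self_zmod (p : ℕ) (x : ZMod p) : p • x = 0 := by
  rw [nsmul_eq_mul, ZMod.natCast_self, zero_mul]

lemma T_prime (p : ℕ) (hp : p.Prime) :
    haveI : NeZero p := ⟨hp.pos.ne'⟩
    sumOrd (ZMod p) = (p - 1) * p + 1 := by
  haveI : NeZero p := ⟨hp.pos.ne'⟩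
  rw [sumOrd_prime_pow_like (ZMod p) hp (nsmul_self_zmod p), ZMod.card]

lemma S_prime (p : ℕ) (hp : p.Prime) :
    haveI : NeZero p := ⟨hp.pos.ne'⟩
    sumOrd (ZMod p × ZMod p) = (p * p - 1) * p + 1 := by
  haveI : NeZero p := ⟨hp.pos.ne'⟩
  rw [sumOrd_prime_pow_like (ZMod p × ZMod p) hp
    (fun x => by ext <;> simp [nsmul_self_zmod]), Fintype.card_prod, ZMod.card]

lemma T_mul (m n : ℕ) [NeZero m] [NeZero n] (h : m.Coprime n) :
    haveI : NeZero (m * n) := ⟨Nat.mul_ne_zero (NeZero.ne m) (NeZero.ne n)⟩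
    sumOrd (ZMod (m * n)) = sumOrd (ZMod m) * sumOrd (ZMod n) := by
  haveI : NeZero (m * n) := ⟨Nat.mul_ne_zero (NeZero.ne m) (NeZero.ne n)⟩
  rw [sumOrd_congr (ZMod.chineseRemainder h).toAddEquiv]
  exact sumOrd_prod _ _ (by rwa [ZMod.card, ZMod.card])

lemma S_mul (m n : ℕ) [NeZero m] [NeZero n] (h : m.Coprime n) :
    haveI : NeZero (m * n) := ⟨Nat.mul_ne_zero (NeZero.ne m) (NeZero.ne n)⟩
    sumOrd (ZMod (m * n) × ZMod (m * n)) =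
      sumOrd (ZMod m × ZMod m) * sumOrd (ZMod n × ZMod n) := by
  haveI : NeZero (m * n) := ⟨Nat.mul_ne_zero (NeZero.ne m) (NeZero.ne n)⟩
  have e : ZMod (m * n) × ZMod (m * n) ≃+ (ZMod m × ZMod m) × (ZMod n × ZMod n) :=
    (AddEquiv.prodCongr (ZMod.chineseRemainder h).toAddEquiv
      (ZMod.chineseRemainder h).toAddEquiv).trans
      (AddEquiv.prodProdProdComm (ZMod m) (ZMod n) (ZMod m) (ZMod n))
  rw [sumOrd_congr e]
  refine sumOrd_prod _ _ ?_
  rw [Fintype.card_prod, Fintype.card_prod, ZMod.card, ZMod.card]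
  exact Nat.Coprime.mul (h.mul_right h) (h.mul_right h)

/-- Nat-level product formula over a finite set of primes. -/
lemma sumOrd_prod_primes (F : Finset ℕ) (hF : ∀ p ∈ F, p.Prime) (M : ℕ) [NeZero M]
    (hM : M = ∏ p ∈ F, p) :
    sumOrd (ZMod M) = ∏ p ∈ F, ((p - 1) * p + 1) ∧
    sumOrd (ZMod M × ZMod M) = ∏ p ∈ F, ((p * p - 1) * p + 1) := by
  induction F using Finset.induction_on generalizing M with
  | empty =>
    subst hM
    simp only [Finset.prod_empty]
    constructor
    · exact sumOrd_subsingleton _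
    · exact sumOrd_subsingleton _
  | @insert a s ha ih =>
    have hap : a.Prime := hF a (Finset.mem_insert_self a s)
    have hsp : ∀ p ∈ s, p.Prime := fun p hp => hF p (Finset.mem_insert_of_mem hp)
    have hP : (0:ℕ) < ∏ p ∈ s, p := Finset.prod_pos fun p hp => (hsp p hp).pos
    haveI : NeZero a := ⟨hap.pos.ne'⟩
    haveI : NeZero (∏ p ∈ s, p) := ⟨hP.ne'⟩
    have hcop : a.Coprime (∏ p ∈ s, p) := Nat.Coprime.prod_right fun p hp =>
      (Nat.coprime_primes hap (hsp p hp)).mpr (fun h => ha (h ▸ hp))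
    rw [Finset.prod_insert ha] at hM
    subst hM
    have ihs := ih hsp (∏ p ∈ s, p) rfl
    constructor
    · rw [T_mul a _ hcop, T_prime a hap, ihs.1, Finset.prod_insert ha]
    · rw [S_mul a _ hcop, S_prime a hap, ihs.2, Finset.prod_insert ha]


/-- Realization: the pair `G = Multiplicative ((ZMod M)²)`, `H ≅ ZMod M` gives the ratio
`S M / (M * T M)`. -/
lemma realize (M : ℕ) [NeZero M] :
    ∃ (G : Type) (_ : CommGroup G), Finite G ∧ ∃ H : Subgroup G,
      avgOrder G / avgOrder H =
        (sumOrd (ZMod M × ZMod M) : ℝ) / ((M : ℝ) * (sumOrd (ZMod M) : ℝ)) := by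
  classical
  refine ⟨Multiplicative (ZMod M × ZMod M), inferInstance, inferInstance, ?_⟩
  refine ⟨AddSubgroup.toSubgroup ((⊤ : AddSubgroup (ZMod M)).prod ⊥), ?_⟩
  set G := Multiplicative (ZMod M × ZMod M)
  set H : Subgroup G := AddSubgroup.toSubgroup ((⊤ : AddSubgroup (ZMod M)).prod ⊥) with hH
  -- an equivalence between `ZMod M` and `H`
  have hmem : ∀ x : ZMod M, Multiplicative.ofAdd ((x, 0) : ZMod M × ZMod M) ∈ H := by
    intro x
    show ((x, 0) : ZMod M × ZMod M) ∈ (⊤ : AddSubgroup (ZMod M)).prod ⊥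
    exact ⟨trivial, rfl⟩
  let f : ZMod M → H := fun x => ⟨Multiplicative.ofAdd ((x, 0) : ZMod M × ZMod M), hmem x⟩
  have hf : Function.Bijective f := by
    constructor
    · intro x y hxy
      have h1 : (f x : G) = (f y : G) := congrArg _ hxy
      simpa [f] using congrArg (fun z : G => (Multiplicative.toAdd z).1) h1
    · rintro ⟨z, hz⟩
      have hz' : (Multiplicative.toAdd z).2 = 0 := by
        have : Multiplicative.toAdd z ∈ (⊤ : AddSubgroup (ZMod M)).prod ⊥ := hz
        exact this.2
      refine ⟨(Multiplicative.toAdd z).1, ?_⟩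
      apply Subtype.ext
      show Multiplicative.ofAdd (((Multiplicative.toAdd z).1, (0 : ZMod M))) = z
      rw [← hz']
      simp
  let e : ZMod M ≃ H := Equiv.ofBijective f hf
  have horder : ∀ x : ZMod M, orderOf (f x) = addOrderOf x := by
    intro x
    rw [← orderOf_injective H.subtype Subtype.coe_injective]
    show orderOf (Multiplicative.ofAdd ((x, 0) : ZMod M × ZMod M)) = addOrderOf x
    rw [orderOf_ofAdd_eq_addOrderOf]
    exact addOrderOf_injective (AddMonoidHom.inl (ZMod M) (ZMod M))
      (fun u v huv => by simpa using congrArg Prod.fst huv) x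
  haveI : Fintype H := Fintype.ofFinite H
  have hcardH : Nat.card H = M := by
    rw [← Nat.card_congr e, Nat.card_zmod]
  have hsumH : (∑ᶠ h : H, (orderOf h : ℝ)) = (sumOrd (ZMod M) : ℝ) := by
    rw [finsum_eq_sum_of_fintype, ← Equiv.sum_comp e (fun h : H => (orderOf h : ℝ))]
    unfold sumOrd
    push_cast
    exact Finset.sum_congr rfl fun x _ => by rw [show e x = f x from rfl, horder]
  have hsumG : (∑ᶠ x : G, (orderOf x : ℝ)) = (sumOrd (ZMod M × ZMod M) : ℝ) := by
    rw [finsum_eq_sum_of_fintype,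
      ← Equiv.sum_comp (Multiplicative.ofAdd : (ZMod M × ZMod M) ≃ G)
        (fun x : G => (orderOf x : ℝ))]
    unfold sumOrd
    push_cast
    exact Finset.sum_congr rfl fun y _ => by rw [orderOf_ofAdd_eq_addOrderOf]
  have hcardG : (Nat.card G : ℝ) = (M : ℝ) * (M : ℝ) := by
    show ((Nat.card (ZMod M × ZMod M) : ℕ) : ℝ) = _
    rw [Nat.card_prod, Nat.card_zmod]
    push_cast
    ring
  have hTpos : 0 < sumOrd (ZMod M) := by
    unfold sumOrd
    exact Finset.sum_pos (fun i _ => addOrderOf_pos i) ⟨0, Finset.mem_univ 0⟩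
  have hM0 : (0:ℝ) < (M:ℝ) := by
    exact_mod_cast Nat.pos_of_ne_zero (NeZero.ne M)
  rw [avgOrder, avgOrder, hsumH, hsumG, hcardG, hcardH]
  have hT0 : (sumOrd (ZMod M) : ℝ) ≠ 0 := by exact_mod_cast hTpos.ne'
  field_simp

/-- The elementary ratio attached to a prime `p`. -/
noncomputable def rfac (p : ℕ) : ℝ :=
  (((p * p - 1) * p + 1 : ℕ) : ℝ) / ((p : ℝ) * (((p - 1) * p + 1 : ℕ) : ℝ))

lemma realize_finset (F : Finset ℕ) (hF : ∀ p ∈ F, p.Prime) :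
    ∃ (G : Type) (_ : CommGroup G), Finite G ∧ ∃ H : Subgroup G,
      avgOrder G / avgOrder H = ∏ p ∈ F, rfac p := by
  set M := ∏ p ∈ F, p with hM
  haveI : NeZero M := ⟨(Finset.prod_pos fun p hp => (hF p hp).pos).ne'⟩
  obtain ⟨G, i, fin, H, hGH⟩ := realize M
  refine ⟨G, i, fin, H, ?_⟩
  obtain ⟨h1, h2⟩ := sumOrd_prod_primes F hF M hM
  rw [hGH, h1, h2]
  have hMcast : (M : ℝ) = ∏ p ∈ F, (p : ℝ) := by rw [hM]; push_cast; rfl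
  rw [hMcast, Nat.cast_prod, Nat.cast_prod, ← Finset.prod_mul_distrib,
    ← Finset.prod_div_distrib]
  rfl

lemma rfac_eq (p : ℕ) (hp : 2 ≤ p) :
    rfac p = (((p:ℝ) * p - 1) * p + 1) / ((p:ℝ) * (((p:ℝ) - 1) * p + 1)) := by
  unfold rfac
  have h1 : 1 ≤ p * p := Nat.one_le_iff_ne_zero.mpr (by positivity)
  have h2 : 1 ≤ p := by omega
  push_cast [Nat.cast_sub h1, Nat.cast_sub h2]
  ring_nf

lemma rfac_le (p : ℕ) (hp : 2 ≤ p) : rfac p ≤ 1 + 1 / (p:ℝ) := by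
  rw [rfac_eq p hp]
  have hx : (2:ℝ) ≤ (p:ℝ) := by exact_mod_cast hp
  have hp0 : (0:ℝ) < (p:ℝ) := by linarith
  have hd : (0:ℝ) < (p:ℝ) * (((p:ℝ) - 1) * p + 1) := by nlinarith [mul_pos hp0 hp0]
  have h1 : (1:ℝ) + 1 / (p:ℝ) = ((p:ℝ) + 1) / p := by field_simp
  rw [h1, div_le_div_iff₀ hd hp0]
  nlinarith [mul_pos hp0 hp0]

lemma rfac_ge (p : ℕ) (hp : 2 ≤ p) : 1 + 1 / (4 * (p:ℝ)) ≤ rfac p := by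
  rw [rfac_eq p hp]
  have hx : (2:ℝ) ≤ (p:ℝ) := by exact_mod_cast hp
  have hp0 : (0:ℝ) < (p:ℝ) := by linarith
  have hd : (0:ℝ) < (p:ℝ) * (((p:ℝ) - 1) * p + 1) := by nlinarith [mul_pos hp0 hp0]
  have h4 : (0:ℝ) < 4 * (p:ℝ) := by linarith
  have h1 : (1:ℝ) + 1 / (4 * (p:ℝ)) = (4 * (p:ℝ) + 1) / (4 * p) := by field_simp
  rw [h1, div_le_div_iff₀ h4 hd]
  nlinarith [mul_nonneg (by linarith : (0:ℝ) ≤ (p:ℝ)) (sq_nonneg ((p:ℝ) - 2)), mul_pos hp0 hp0]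

lemma diverge (N : ℕ) :
    Filter.Tendsto (fun n => ∑ i ∈ Finset.range n,
      (if i.Prime ∧ N ≤ i then 1 / (4 * (i:ℝ)) else 0)) atTop atTop := by
  classical
  set h : ℕ → ℝ := fun i => if i.Prime ∧ N ≤ i then 1 / (4 * (i:ℝ)) else 0 with hh
  have hnonneg : ∀ i, 0 ≤ h i := fun i => by
    rw [hh]; dsimp only; split
    · positivity
    · exact le_refl 0
  refine (not_summable_iff_tendsto_nat_atTop_of_nonneg hnonneg).mp ?_
  intro hsum
  apply not_summable_one_div_on_primes
  have h4 : Summable (fun i => 4 * h (i + N)) :=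
    ((summable_nat_add_iff N).mpr hsum).mul_left 4
  have heq : (fun i => Set.indicator {p | Nat.Prime p} (fun n : ℕ => (1:ℝ)/n) (i + N))
      = fun i => 4 * h (i + N) := by
    funext i
    by_cases hpm : Nat.Prime (i + N)
    · have hge : N ≤ i + N := Nat.le_add_left N i
      have hne : ((i + N : ℕ) : ℝ) ≠ 0 := Nat.cast_ne_zero.mpr hpm.pos.ne'
      rw [Set.indicator_apply, if_pos (show (i+N) ∈ {p | Nat.Prime p} from hpm), hh]
      dsimp only
      rw [if_pos ⟨hpm, hge⟩]
      field_simp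
    · rw [Set.indicator_apply, if_neg (show (i+N) ∉ {p | Nat.Prime p} from hpm), hh]
      dsimp only
      rw [if_neg (fun hc => hpm hc.1), mul_zero]
  rw [← summable_nat_add_iff N, heq]
  exact h4

theorem avgOrder_ratio_abelian_dense :
    ∀ a : ℝ, 1 ≤ a → ∀ ε : ℝ, 0 < ε →
      ∃ (G : Type) (_ : CommGroup G), Finite G ∧
        ∃ H : Subgroup G, |avgOrder G / avgOrder H - a| < ε := by
  intro a ha ε hε
  classical
  set N : ℕ := ⌈a / ε⌉₊ + 1 with hN
  have hN1 : 1 ≤ N := Nat.le_add_left 1 _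
  have hNR : (0:ℝ) < N := by exact_mod_cast Nat.lt_of_lt_of_le Nat.zero_lt_one hN1
  have haN : a / ε < N := lt_of_le_of_lt (Nat.le_ceil _) (by exact_mod_cast Nat.lt_succ_self _)
  have haεN : a < ε * N := by rw [div_lt_iff₀ hε] at haN; linarith
  set g : ℕ → ℝ := fun i => if i.Prime ∧ N ≤ i then rfac i else 1 with hg
  set P : ℕ → ℝ := fun n => ∏ i ∈ Finset.range n, g i with hP
  have hg1 : ∀ i, 1 ≤ g i := by
    intro i; rw [hg]; dsimp only; split_ifs with h
    · have h1 := rfac_ge i h.1.two_le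
      have h2 : (0:ℝ) ≤ 1 / (4 * (i:ℝ)) := by positivity
      linarith
    · exact le_refl 1
  have hgle : ∀ i, g i ≤ 1 + 1 / (N:ℝ) := by
    intro i; rw [hg]; dsimp only; split_ifs with h
    · have h1 := rfac_le i h.1.two_le
      have hi0 : (0:ℝ) < N := hNR
      have h2 : (1:ℝ) / i ≤ 1 / N := by
        apply one_div_le_one_div_of_le hi0
        exact_mod_cast h.2
      linarith
    · have : (0:ℝ) ≤ 1 / N := by positivity
      linarith
  have hgdiff : ∀ i, (if i.Prime ∧ N ≤ i then 1 / (4 * (i:ℝ)) else 0) ≤ g i - 1 := by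
    intro i; rw [hg]; dsimp only; split_ifs with h
    · linarith [rfac_ge i h.1.two_le]
    · simp
  have hP1 : ∀ n, 1 ≤ P n := by
    intro n
    induction n with
    | zero => simp [hP]
    | succ n ih =>
      have hPs : P (n + 1) = P n * g n := Finset.prod_range_succ g n
      rw [hPs]
      nlinarith [hg1 n]
  have hPsum : ∀ n,
      1 + ∑ i ∈ Finset.range n, (if i.Prime ∧ N ≤ i then 1 / (4 * (i:ℝ)) else 0) ≤ P n := by
    intro n; induction n with
    | zero => simp [hP]
    | succ n ih =>
      have hPs : P (n + 1) = P n * g n := Finset.prod_range_succ g n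
      rw [Finset.sum_range_succ, hPs]
      have h1 : P n + (g n - 1) ≤ P n * g n := by nlinarith [hP1 n, hg1 n]
      have h2 := hgdiff n
      linarith
  obtain ⟨n1, hn1⟩ := ((diverge N).eventually_gt_atTop a).exists
  have hex : ∃ n, a < P n := ⟨n1, by linarith [hPsum n1]⟩
  have hfind := Nat.find_spec hex
  have hne0 : Nat.find hex ≠ 0 := by
    intro h0
    rw [h0] at hfind
    have : P 0 = 1 := by simp [hP]
    rw [this] at hfind
    linarith
  set n := Nat.find hex - 1 with hn
  have hPle : P n ≤ a := not_lt.mp (Nat.find_min hex (by omega))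
  have hPgt : a < P (n + 1) := by
    rw [show n + 1 = Nat.find hex by omega]; exact hfind
  have hstep : P (n + 1) = P n * g n := Finset.prod_range_succ g n
  have hPn_pos : (0:ℝ) < P n := lt_of_lt_of_le one_pos (hP1 n)
  have hchain : a < P n + a / N := by
    have h1 : P n * g n ≤ P n * (1 + 1 / N) :=
      mul_le_mul_of_nonneg_left (hgle n) (le_of_lt hPn_pos)
    have h2 : P n / N ≤ a / N := by gcongr
    calc a < P n * g n := hstep ▸ hPgt
      _ ≤ P n * (1 + 1 / N) := h1
      _ = P n + P n / N := by ring
      _ ≤ P n + a / N := by linarith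
  have habs : |P n - a| < ε := by
    rw [abs_sub_comm, abs_of_nonneg (by linarith : (0:ℝ) ≤ a - P n)]
    have hcal : a / N < ε := by rw [div_lt_iff₀ hNR]; linarith
    linarith
  have hfilter : P n = ∏ p ∈ (Finset.range n).filter (fun i => i.Prime ∧ N ≤ i), rfac p := by
    rw [Finset.prod_filter, hP]
  obtain ⟨G, iG, finG, H, hGH⟩ := realize_finset
    ((Finset.range n).filter (fun i => i.Prime ∧ N ≤ i))
    (fun p hp => (Finset.mem_filter.mp hp).2.1)
  exact ⟨G, iG, finG, H, by rw [hGH, ← hfilter]; exact habs⟩
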